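/- An element x of the CAR algebra A over Z^ν is even (Θ(x) = x) if and only if it is asymptotically central under lattice translations: lim_{k→∞} ‖[τ_k(x), y]‖ = 0 for all y ∈ A. Consequently, any automorphism α of A commuting with all lattice translations τ_k (k ∈ Z^ν) commutes with the parity automorphism Θ. -/

import Mathlib

set_option maxHeartbeats 1000000

namespace CarAux

variable {ν : ℕ} {A : Type*} [CStarAlgebra A]
variable (a : (Fin ν → ℤ) → A) (Θ : A ≃⋆ₐ[ℂ] A)
variable (hCAR₁ : ∀ i j, star (a i) * a j + a j * star (a i) = if i = j then (1 : A) else 0)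
variable (hCAR₂ : ∀ i j, a i * a j + a j * a i = 0)
variable (hΘ : ∀ i, Θ (a i) = - a i)




lemma halg (Θ : A ≃⋆ₐ[ℂ] A) (r : ℂ) : Θ (algebraMap ℂ A r) = algebraMap ℂ A r := by
  rw [Algebra.algebraMap_eq_smul_one, map_smul, map_one]

/-- Pulling a generator `a j` through an element supported away from `j`. -/
lemma pullthrough (a : (Fin ν → ℤ) → A) (Θ : A ≃⋆ₐ[ℂ] A)
    (hCAR₁ : ∀ i j, star (a i) * a j + a j * star (a i) = if i = j then (1 : A) else 0)
    (hCAR₂ : ∀ i j, a i * a j + a j * a i = 0)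
    (hΘ : ∀ i, Θ (a i) = - a i)
    {F : Set (Fin ν → ℤ)} {j : Fin ν → ℤ} (hj : j ∉ F)
    {x : A} (hx : x ∈ StarAlgebra.adjoin ℂ (a '' F)) :
    a j * x = Θ x * a j ∧ star (a j) * x = Θ x * star (a j) := by
  have key : (a j * x = Θ x * a j ∧ star (a j) * x = Θ x * star (a j)) ∧
      (a j * Θ x = x * a j ∧ star (a j) * Θ x = x * star (a j)) := by
    induction hx using StarAlgebra.adjoin_induction with
    | mem z hz =>
      obtain ⟨i, hi, rfl⟩ := hz
      have hij : ¬ (j = i) := fun h => hj (h ▸ hi)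
      have h2 : a j * a i = -(a i * a j) := by
        rw [eq_neg_iff_add_eq_zero, add_comm]; exact hCAR₂ i j
      have h1 : star (a j) * a i = -(a i * star (a j)) := by
        rw [eq_neg_iff_add_eq_zero]
        have := hCAR₁ j i; rwa [if_neg hij] at this
      refine ⟨⟨?_, ?_⟩, ?_, ?_⟩
      · rw [hΘ i, neg_mul, h2]
      · rw [hΘ i, neg_mul, h1]
      · rw [hΘ i, mul_neg, h2, neg_neg]
      · rw [hΘ i, mul_neg, h1, neg_neg]
    | algebraMap r =>
      rw [halg]
      exact ⟨⟨(Algebra.commutes r _).symm, (Algebra.commutes r _).symm⟩,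
        (Algebra.commutes r _).symm, (Algebra.commutes r _).symm⟩
    | add p q hp hq ihp ihq =>
      obtain ⟨⟨p1, p2⟩, p3, p4⟩ := ihp
      obtain ⟨⟨q1, q2⟩, q3, q4⟩ := ihq
      refine ⟨⟨?_, ?_⟩, ?_, ?_⟩ <;>
        simp only [map_add, mul_add, add_mul, p1, p2, p3, p4, q1, q2, q3, q4]
    | mul p q hp hq ihp ihq =>
      obtain ⟨⟨p1, p2⟩, p3, p4⟩ := ihp
      obtain ⟨⟨q1, q2⟩, q3, q4⟩ := ihq
      refine ⟨⟨?_, ?_⟩, ?_, ?_⟩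
      · calc a j * (p * q) = (a j * p) * q := by rw [mul_assoc]
          _ = Θ p * (a j * q) := by rw [p1, mul_assoc]
          _ = Θ p * (Θ q * a j) := by rw [q1]
          _ = Θ (p * q) * a j := by rw [map_mul, mul_assoc]
      · calc star (a j) * (p * q) = (star (a j) * p) * q := by rw [mul_assoc]
          _ = Θ p * (star (a j) * q) := by rw [p2, mul_assoc]
          _ = Θ p * (Θ q * star (a j)) := by rw [q2]
          _ = Θ (p * q) * star (a j) := by rw [map_mul, mul_assoc]
      · calc a j * Θ (p * q) = (a j * Θ p) * Θ q := by rw [map_mul, mul_assoc]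
          _ = p * (a j * Θ q) := by rw [p3, mul_assoc]
          _ = p * (q * a j) := by rw [q3]
          _ = (p * q) * a j := by rw [mul_assoc]
      · calc star (a j) * Θ (p * q) = (star (a j) * Θ p) * Θ q := by rw [map_mul, mul_assoc]
          _ = p * (star (a j) * Θ q) := by rw [p4, mul_assoc]
          _ = p * (q * star (a j)) := by rw [q4]
          _ = (p * q) * star (a j) := by rw [mul_assoc]
    | star p hp ihp =>
      obtain ⟨⟨p1, p2⟩, p3, p4⟩ := ihp
      constructor
      constructor
      · -- a j * star p = Θ (star p) * a j, from star of p4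
        have := congrArg star p4
        simp only [star_mul, star_star] at this
        rw [map_star]
        exact this.symm
      · -- star (a j) * star p = Θ (star p) * star (a j), from star of p3
        have := congrArg star p3
        simp only [star_mul, star_star] at this
        rw [map_star]
        exact this.symm
      constructor
      · -- a j * Θ (star p) = star p * a j, from star of p2
        have := congrArg star p2
        simp only [star_mul, star_star] at this
        rw [map_star]
        exact this.symm
      · -- star (a j) * Θ (star p) = star p * star (a j), from star of p1
        have := congrArg star p1
        simp only [star_mul, star_star] at this
        rw [map_star]
        exact this.symm
  exact key.1






section
include hCAR₁ hCAR₂ hΘ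

/-- Even elements commute with elements of disjoint support. -/
lemma even_commute {F G : Set (Fin ν → ℤ)} (hFG : ∀ j ∈ G, j ∉ F)
    {x : A} (hx : x ∈ StarAlgebra.adjoin ℂ (a '' F)) (hex : Θ x = x)
    {y : A} (hy : y ∈ StarAlgebra.adjoin ℂ (a '' G)) : y * x = x * y := by
  have key : y * x = x * y ∧ y * star x = star x * y := by
    induction hy using StarAlgebra.adjoin_induction with
    | mem z hz =>
      obtain ⟨j, hjG, rfl⟩ := hz
      have h1 := pullthrough a Θ hCAR₁ hCAR₂ hΘ (hFG j hjG) hx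
      have h2 := pullthrough a Θ hCAR₁ hCAR₂ hΘ (hFG j hjG) (star_mem hx)
      refine ⟨?_, ?_⟩
      · rw [h1.1, hex]
      · rw [h2.1, map_star, hex]
    | algebraMap r => exact ⟨Algebra.commutes r _, Algebra.commutes r _⟩
    | add p q hp hq ihp ihq =>
      exact ⟨by rw [add_mul, mul_add, ihp.1, ihq.1], by rw [add_mul, mul_add, ihp.2, ihq.2]⟩
    | mul p q hp hq ihp ihq =>
      refine ⟨?_, ?_⟩
      · rw [mul_assoc, ihq.1, ← mul_assoc, ihp.1, mul_assoc]
      · rw [mul_assoc, ihq.2, ← mul_assoc, ihp.2, mul_assoc]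
    | star p hp ihp =>
      refine ⟨?_, ?_⟩
      · have := congrArg star ihp.2
        simp only [star_mul, star_star] at this
        exact this.symm
      · have := congrArg star ihp.1
        simp only [star_mul, star_star] at this
        exact this.symm
  exact key.1

/-- Odd elements graded-commute with elements of disjoint support:
`y * x = x * Θ y`. -/
lemma odd_supercommute {F G : Set (Fin ν → ℤ)} (hFG : ∀ j ∈ G, j ∉ F)
    {x : A} (hx : x ∈ StarAlgebra.adjoin ℂ (a '' F)) (hox : Θ x = -x)
    {y : A} (hy : y ∈ StarAlgebra.adjoin ℂ (a '' G)) : y * x = x * Θ y := by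
  have hsox : Θ (star x) = -(star x) := by rw [map_star, hox, star_neg]
  have key : (y * x = x * Θ y) ∧ (x * y = Θ y * x) ∧
      (y * star x = star x * Θ y) ∧ (star x * y = Θ y * star x) := by
    induction hy using StarAlgebra.adjoin_induction with
    | mem z hz =>
      obtain ⟨j, hjG, rfl⟩ := hz
      have h1 := (pullthrough a Θ hCAR₁ hCAR₂ hΘ (hFG j hjG) hx).1
      have h2 := (pullthrough a Θ hCAR₁ hCAR₂ hΘ (hFG j hjG) (star_mem hx)).1
      rw [hox, neg_mul] at h1
      rw [hsox, neg_mul] at h2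
      refine ⟨?_, ?_, ?_, ?_⟩
      · rw [hΘ j, mul_neg, h1]
      · rw [hΘ j, neg_mul]; rw [h1, neg_neg]
      · rw [hΘ j, mul_neg, h2]
      · rw [hΘ j, neg_mul]; rw [h2, neg_neg]
    | algebraMap r =>
      rw [halg]
      exact ⟨Algebra.commutes r _, (Algebra.commutes r _).symm,
        Algebra.commutes r _, (Algebra.commutes r _).symm⟩
    | add p q hp hq ihp ihq =>
      obtain ⟨p1, p2, p3, p4⟩ := ihp
      obtain ⟨q1, q2, q3, q4⟩ := ihq
      refine ⟨?_, ?_, ?_, ?_⟩ <;>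
        simp only [map_add, mul_add, add_mul, p1, p2, p3, p4, q1, q2, q3, q4]
    | mul p q hp hq ihp ihq =>
      obtain ⟨p1, p2, p3, p4⟩ := ihp
      obtain ⟨q1, q2, q3, q4⟩ := ihq
      refine ⟨?_, ?_, ?_, ?_⟩
      · rw [map_mul, mul_assoc, q1, ← mul_assoc, p1, mul_assoc]
      · rw [map_mul, ← mul_assoc, p2, mul_assoc, q2, ← mul_assoc]
      · rw [map_mul, mul_assoc, q3, ← mul_assoc, p3, mul_assoc]
      · rw [map_mul, ← mul_assoc, p4, mul_assoc, q4, ← mul_assoc]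
    | star p hp ihp =>
      obtain ⟨p1, p2, p3, p4⟩ := ihp
      refine ⟨?_, ?_, ?_, ?_⟩
      · have := congrArg star p4
        simp only [star_mul, star_star] at this
        rw [map_star]; exact this
      · have := congrArg star p3
        simp only [star_mul, star_star] at this
        rw [map_star]; exact this
      · have := congrArg star p2
        simp only [star_mul, star_star] at this
        rw [map_star]; exact this
      · have := congrArg star p1
        simp only [star_mul, star_star] at this
        rw [map_star]; exact this
  exact key.1

end

include hΘ in
/-- `Θ` preserves local subalgebras. -/
lemma theta_adjoin_mem {F : Set (Fin ν → ℤ)}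
    {x : A} (hx : x ∈ StarAlgebra.adjoin ℂ (a '' F)) :
    Θ x ∈ StarAlgebra.adjoin ℂ (a '' F) := by
  induction hx using StarAlgebra.adjoin_induction with
  | mem z hz =>
    obtain ⟨i, hi, rfl⟩ := hz
    rw [hΘ i]
    exact neg_mem (StarAlgebra.subset_adjoin ℂ _ ⟨i, hi, rfl⟩)
  | algebraMap r => rw [halg]; exact algebraMap_mem _ r
  | add p q hp hq ihp ihq => rw [map_add]; exact add_mem ihp ihq
  | mul p q hp hq ihp ihq => rw [map_mul]; exact mul_mem ihp ihq
  | star p hp ihp => rw [map_star]; exact star_mem ihp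

/-- Translations map local subalgebras to translated local subalgebras. -/
lemma T_adjoin_mem (T : (Fin ν → ℤ) → (A ≃⋆ₐ[ℂ] A)) (hT : ∀ k i, T k (a i) = a (i + k))
    {F : Set (Fin ν → ℤ)} (k : Fin ν → ℤ) {x : A} (hx : x ∈ StarAlgebra.adjoin ℂ (a '' F)) :
    T k x ∈ StarAlgebra.adjoin ℂ (a '' ((· + k) '' F)) := by
  induction hx using StarAlgebra.adjoin_induction with
  | mem z hz =>
    obtain ⟨i, hi, rfl⟩ := hz
    rw [hT k i]
    exact StarAlgebra.subset_adjoin ℂ _ ⟨i + k, ⟨i, hi, rfl⟩, rfl⟩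
  | algebraMap r => rw [halg]; exact algebraMap_mem _ r
  | add p q hp hq ihp ihq => rw [map_add]; exact add_mem ihp ihq
  | mul p q hp hq ihp ihq => rw [map_mul]; exact mul_mem ihp ihq
  | star p hp ihp => rw [map_star]; exact star_mem ihp






lemma norm_map' (φ : A ≃⋆ₐ[ℂ] A) (x : A) : ‖φ x‖ = ‖x‖ :=
  NonUnitalStarAlgHom.norm_map φ φ.injective x

lemma dense_carrier (hgen : (StarAlgebra.adjoin ℂ (a '' (Set.univ : Set (Fin ν → ℤ)))).topologicalClosure = ⊤) :
    Dense ((StarAlgebra.adjoin ℂ (a '' (Set.univ : Set (Fin ν → ℤ))) : Set A)) := by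
  rw [dense_iff_closure_eq, ← StarSubalgebra.topologicalClosure_coe, hgen]
  rfl

/-- Two continuous maps agreeing on the generated star-subalgebra agree everywhere. -/
lemma dense_eq (hgen : (StarAlgebra.adjoin ℂ (a '' (Set.univ : Set (Fin ν → ℤ)))).topologicalClosure = ⊤)
    {f g : A → A} (hf : Continuous f) (hg : Continuous g)
    (h : ∀ s ∈ StarAlgebra.adjoin ℂ (a '' (Set.univ : Set (Fin ν → ℤ))), f s = g s) : ∀ x, f x = g x := by
  have := Continuous.ext_on (dense_carrier a hgen) hf hg (fun s hs => h s hs)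
  exact fun x => congrFun this x

lemma exists_finset_support {s : A} (hs : s ∈ StarAlgebra.adjoin ℂ (a '' (Set.univ : Set (Fin ν → ℤ)))) :
    ∃ F : Finset (Fin ν → ℤ), s ∈ StarAlgebra.adjoin ℂ (a '' (F : Set (Fin ν → ℤ))) := by
  have hmono : ∀ {F G : Finset (Fin ν → ℤ)}, F ⊆ G →
      StarAlgebra.adjoin ℂ (a '' (F : Set (Fin ν → ℤ))) ≤ StarAlgebra.adjoin ℂ (a '' (G : Set (Fin ν → ℤ))) := by
    intro F G hFG
    exact StarAlgebra.adjoin_le ((Set.image_mono (f := a) (Finset.coe_subset.2 hFG)).trans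
      (StarAlgebra.subset_adjoin ℂ _))
  induction hs using StarAlgebra.adjoin_induction with
  | mem z hz =>
    obtain ⟨i, _, rfl⟩ := hz
    exact ⟨{i}, StarAlgebra.subset_adjoin ℂ _ ⟨i, by simp, rfl⟩⟩
  | algebraMap r => exact ⟨∅, algebraMap_mem _ r⟩
  | add p q hp hq ihp ihq =>
    obtain ⟨F1, h1⟩ := ihp; obtain ⟨F2, h2⟩ := ihq
    exact ⟨F1 ∪ F2, add_mem (hmono Finset.subset_union_left h1)
      (hmono Finset.subset_union_right h2)⟩
  | mul p q hp hq ihp ihq =>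
    obtain ⟨F1, h1⟩ := ihp; obtain ⟨F2, h2⟩ := ihq
    exact ⟨F1 ∪ F2, mul_mem (hmono Finset.subset_union_left h1)
      (hmono Finset.subset_union_right h2)⟩
  | star p hp ihp =>
    obtain ⟨F1, h1⟩ := ihp
    exact ⟨F1, star_mem h1⟩

lemma exists_local_approx
    (hgen : (StarAlgebra.adjoin ℂ (a '' (Set.univ : Set (Fin ν → ℤ)))).topologicalClosure = ⊤)
    (x : A) {ε : ℝ} (hε : 0 < ε) :
    ∃ (F : Finset (Fin ν → ℤ)) (s : A), s ∈ StarAlgebra.adjoin ℂ (a '' (F : Set (Fin ν → ℤ))) ∧ ‖x - s‖ < ε := by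
  have hx : x ∈ closure ((StarAlgebra.adjoin ℂ (a '' (Set.univ : Set (Fin ν → ℤ))) : Set A)) := by
    rw [(dense_carrier a hgen).closure_eq]; trivial
  rw [Metric.mem_closure_iff] at hx
  obtain ⟨s, hs, hd⟩ := hx ε hε
  obtain ⟨F, hF⟩ := exists_finset_support a hs
  exact ⟨F, s, hF, by rwa [dist_eq_norm] at hd⟩

include hΘ in
/-- Approximation of the odd part by a local odd element. -/
lemma exists_odd_approx
    (hgen : (StarAlgebra.adjoin ℂ (a '' (Set.univ : Set (Fin ν → ℤ)))).topologicalClosure = ⊤)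
    (hΘΘ : ∀ x : A, Θ (Θ x) = x)
    (x : A) {ε : ℝ} (hε : 0 < ε) :
    ∃ (F : Finset (Fin ν → ℤ)) (s : A), s ∈ StarAlgebra.adjoin ℂ (a '' (F : Set (Fin ν → ℤ))) ∧ Θ s = -s ∧
      ‖(2 : ℂ)⁻¹ • (x - Θ x) - s‖ < ε := by
  obtain ⟨F, s', hs', hd⟩ := exists_local_approx a hgen x hε
  refine ⟨F, (2 : ℂ)⁻¹ • (s' - Θ s'), ?_, ?_, ?_⟩
  · exact SMulMemClass.smul_mem _ (sub_mem hs' (theta_adjoin_mem a Θ hΘ hs'))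
  · rw [map_smul, map_sub, hΘΘ, ← smul_neg, neg_sub]
  · have heq : (2 : ℂ)⁻¹ • (x - Θ x) - (2 : ℂ)⁻¹ • (s' - Θ s') =
        (2 : ℂ)⁻¹ • ((x - s') - Θ (x - s')) := by
      rw [← smul_sub]
      congr 1
      rw [map_sub]
      abel
    rw [heq]
    have h2 : ‖(2 : ℂ)⁻¹‖ = 2⁻¹ := by norm_num
    rw [norm_smul, h2]
    have : ‖x - s' - Θ (x - s')‖ ≤ ‖x - s'‖ + ‖Θ (x - s')‖ := norm_sub_le _ _
    rw [norm_map' Θ] at this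
    calc (2:ℝ)⁻¹ * ‖x - s' - Θ (x - s')‖ ≤ (2:ℝ)⁻¹ * (‖x - s'‖ + ‖x - s'‖) := by
          apply mul_le_mul_of_nonneg_left this; norm_num
      _ = ‖x - s'‖ := by ring
      _ < ε := hd


include hΘ in
/-- Approximation of the even part by a local even element. -/
lemma exists_even_approx
    (hgen : (StarAlgebra.adjoin ℂ (a '' (Set.univ : Set (Fin ν → ℤ)))).topologicalClosure = ⊤)
    (hΘΘ : ∀ x : A, Θ (Θ x) = x)
    (x : A) {ε : ℝ} (hε : 0 < ε) :
    ∃ (F : Finset (Fin ν → ℤ)) (s : A), s ∈ StarAlgebra.adjoin ℂ (a '' (F : Set (Fin ν → ℤ))) ∧ Θ s = s ∧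
      ‖(2 : ℂ)⁻¹ • (x + Θ x) - s‖ < ε := by
  obtain ⟨F, s', hs', hd⟩ := exists_local_approx a hgen x hε
  refine ⟨F, (2 : ℂ)⁻¹ • (s' + Θ s'), ?_, ?_, ?_⟩
  · exact SMulMemClass.smul_mem _ (add_mem hs' (theta_adjoin_mem a Θ hΘ hs'))
  · rw [map_smul, map_add, hΘΘ, add_comm]
  · have heq : (2 : ℂ)⁻¹ • (x + Θ x) - (2 : ℂ)⁻¹ • (s' + Θ s') =
        (2 : ℂ)⁻¹ • ((x - s') + Θ (x - s')) := by
      rw [← smul_sub]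
      congr 1
      rw [map_sub]
      abel
    rw [heq]
    have h2 : ‖(2 : ℂ)⁻¹‖ = 2⁻¹ := by norm_num
    rw [norm_smul, h2]
    have : ‖x - s' + Θ (x - s')‖ ≤ ‖x - s'‖ + ‖Θ (x - s')‖ := norm_add_le _ _
    rw [norm_map' Θ] at this
    calc (2:ℝ)⁻¹ * ‖x - s' + Θ (x - s')‖ ≤ (2:ℝ)⁻¹ * (‖x - s'‖ + ‖x - s'‖) := by
          apply mul_le_mul_of_nonneg_left this; norm_num
      _ = ‖x - s'‖ := by ring
      _ < ε := hd

lemma eventually_disjoint (F G : Finset (Fin ν → ℤ)) :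
    ∀ᶠ k in Filter.cofinite,
      ∀ j ∈ (G : Set (Fin ν → ℤ)), j ∉ (· + k) '' (F : Set (Fin ν → ℤ)) := by
  rw [Filter.eventually_cofinite]
  apply Set.Finite.subset
    (Set.Finite.image (fun p => p.2 - p.1) (F.finite_toSet.prod G.finite_toSet))
  intro k hk
  simp only [Set.mem_setOf_eq] at hk
  push_neg at hk
  obtain ⟨j, hjG, f, hfF, hfj⟩ := hk
  refine ⟨(f, j), ⟨hfF, hjG⟩, ?_⟩
  simp only [← hfj]
  funext t
  simp [add_comm]

lemma norm_add₄ (p q r s : A) : ‖p + q + r + s‖ ≤ ‖p‖ + ‖q‖ + ‖r‖ + ‖s‖ := by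
  calc ‖p + q + r + s‖ ≤ ‖p + q + r‖ + ‖s‖ := norm_add_le _ _
    _ ≤ ‖p + q‖ + ‖r‖ + ‖s‖ := by have := norm_add_le (p + q) r; linarith
    _ ≤ ‖p‖ + ‖q‖ + ‖r‖ + ‖s‖ := by have := norm_add_le p q; linarith

lemma le_zero_of_eps (c K : ℝ) (hK : 0 < K) (h : ∀ ε : ℝ, 0 < ε → ε ≤ 1 → c ≤ ε * K) :
    c ≤ 0 := by
  by_contra hc
  push_neg at hc
  have hε : 0 < min 1 (c / (2 * K)) := lt_min one_pos (by positivity)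
  have := h _ hε (min_le_left _ _)
  have h2 : min 1 (c / (2 * K)) * K ≤ (c / (2 * K)) * K :=
    mul_le_mul_of_nonneg_right (min_le_right _ _) hK.le
  rw [div_mul_eq_mul_div, mul_comm, mul_div_assoc] at h2
  have h3 : K / (2 * K) = 1 / 2 := by field_simp
  rw [h3] at h2
  linarith

lemma norm_mul_unit {u : A} (huu : u * u = 1) (hnu : ‖u‖ = 1) (z : A) : ‖z * u‖ = ‖z‖ := by
  apply le_antisymm
  · calc ‖z * u‖ ≤ ‖z‖ * ‖u‖ := norm_mul_le _ _
      _ = ‖z‖ := by rw [hnu, mul_one]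
  · calc ‖z‖ = ‖z * u * u‖ := by rw [mul_assoc, huu, mul_one]
      _ ≤ ‖z * u‖ * ‖u‖ := norm_mul_le _ _
      _ = ‖z * u‖ := by rw [hnu, mul_one]

include hCAR₁ hCAR₂ hΘ in
/-- An even element is asymptotically central. -/
lemma even_implies_AC
    (hgen : (StarAlgebra.adjoin ℂ (a '' (Set.univ : Set (Fin ν → ℤ)))).topologicalClosure = ⊤)
    (hΘΘ : ∀ x : A, Θ (Θ x) = x)
    (T : (Fin ν → ℤ) → (A ≃⋆ₐ[ℂ] A)) (hT : ∀ k i, T k (a i) = a (i + k))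
    (hΘT : ∀ (k : Fin ν → ℤ) (x : A), Θ (T k x) = T k (Θ x))
    {x : A} (hex : Θ x = x) (y : A) :
    Filter.Tendsto (fun k : Fin ν → ℤ => ‖T k x * y - y * T k x‖)
      Filter.cofinite (nhds 0) := by
  rw [Metric.tendsto_nhds]
  intro ε hε
  have hD : (0:ℝ) < 2*‖x‖+2*‖y‖+3 := by positivity
  set η := min 1 (ε / (2*‖x‖+2*‖y‖+3)) with hη_def
  have hη : 0 < η := lt_min one_pos (div_pos hε hD)
  have hη1 : η ≤ 1 := min_le_left _ _
  have hη2 : η * (2*‖x‖+2*‖y‖+3) ≤ ε := by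
    rw [← le_div_iff₀ hD]
    exact min_le_right _ _
  obtain ⟨F, s, hsF, hse, hsx⟩ := exists_even_approx a Θ hΘ hgen hΘΘ x hη
  have hexx : (2:ℂ)⁻¹ • (x + Θ x) = x := by
    rw [hex, ← two_smul ℂ x, smul_smul]
    norm_num
  rw [hexx] at hsx
  obtain ⟨G, t, htG, hty⟩ := exists_local_approx a hgen y hη
  filter_upwards [eventually_disjoint F G] with k hk
  rw [Real.dist_eq, sub_zero, abs_of_nonneg (norm_nonneg _)]
  have hTs_mem : T k s ∈ StarAlgebra.adjoin ℂ (a '' ((· + k) '' (F : Set (Fin ν → ℤ)))) :=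
    T_adjoin_mem a T hT k hsF
  have hTse : Θ (T k s) = T k s := by rw [hΘT, hse]
  have hcomm : t * T k s = T k s * t :=
    even_commute a Θ hCAR₁ hCAR₂ hΘ hk hTs_mem hTse htG
  have hid : T k x * y - y * T k x =
      (T k x - T k s) * y + T k s * (y - t) + (T k s * t - t * T k s)
        + (t - y) * T k s + y * (T k s - T k x) := by noncomm_ring
  rw [hid, hcomm, sub_self, add_zero]
  have hTxs : ‖T k x - T k s‖ = ‖x - s‖ := by rw [← map_sub, norm_map']
  have hTs : ‖T k s‖ = ‖s‖ := norm_map' _ _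
  have hTyt : ‖T k x - T k s‖ < η := by rw [hTxs]; exact hsx
  have hs_le : ‖s‖ ≤ ‖x‖ + η := by
    have h1 : ‖s‖ - ‖x‖ ≤ ‖s - x‖ := norm_sub_norm_le _ _
    have h2 : ‖s - x‖ = ‖x - s‖ := norm_sub_rev _ _
    have := hsx
    linarith
  have b1 : ‖(T k x - T k s) * y‖ ≤ η * ‖y‖ := by
    calc ‖(T k x - T k s) * y‖ ≤ ‖T k x - T k s‖ * ‖y‖ := norm_mul_le _ _
      _ ≤ η * ‖y‖ := mul_le_mul_of_nonneg_right hTyt.le (norm_nonneg _)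
  have b2 : ‖T k s * (y - t)‖ ≤ (‖x‖ + η) * η := by
    calc ‖T k s * (y - t)‖ ≤ ‖T k s‖ * ‖y - t‖ := norm_mul_le _ _
      _ ≤ (‖x‖ + η) * η := by
          rw [hTs]
          apply mul_le_mul hs_le hty.le (norm_nonneg _)
          positivity
  have b3 : ‖(t - y) * T k s‖ ≤ η * (‖x‖ + η) := by
    calc ‖(t - y) * T k s‖ ≤ ‖t - y‖ * ‖T k s‖ := norm_mul_le _ _
      _ ≤ η * (‖x‖ + η) := by
          rw [hTs, norm_sub_rev]
          apply mul_le_mul hty.le hs_le (norm_nonneg _) hη.le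
  have b4 : ‖y * (T k s - T k x)‖ ≤ ‖y‖ * η := by
    calc ‖y * (T k s - T k x)‖ ≤ ‖y‖ * ‖T k s - T k x‖ := norm_mul_le _ _
      _ ≤ ‖y‖ * η := by
          rw [norm_sub_rev, hTxs]
          exact mul_le_mul_of_nonneg_left hsx.le (norm_nonneg _)
  have hb := norm_add₄ ((T k x - T k s) * y) (T k s * (y - t)) ((t - y) * T k s)
    (y * (T k s - T k x))
  have hxnn : (0:ℝ) ≤ ‖x‖ := norm_nonneg _
  have hynn : (0:ℝ) ≤ ‖y‖ := norm_nonneg _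
  nlinarith [hb, b1, b2, b3, b4, hη, hη1, hη2, hxnn, hynn]

include hCAR₁ hCAR₂ hΘ in
/-- An odd translation invariant element vanishes. -/
lemma odd_invariant_eq_zero
    (hgen : (StarAlgebra.adjoin ℂ (a '' (Set.univ : Set (Fin ν → ℤ)))).topologicalClosure = ⊤)
    (hΘΘ : ∀ x : A, Θ (Θ x) = x)
    (T : (Fin ν → ℤ) → (A ≃⋆ₐ[ℂ] A)) (hT : ∀ k i, T k (a i) = a (i + k))
    (hΘT : ∀ (k : Fin ν → ℤ) (x : A), Θ (T k x) = T k (Θ x))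
    [Infinite (Fin ν → ℤ)]
    {z : A} (hodd : Θ z = -z) (hinv : ∀ k, T k z = z) : z = 0 := by
  have hzz : (2:ℂ)⁻¹ • (z - Θ z) = z := by
    rw [hodd, sub_neg_eq_add, ← two_smul ℂ z, smul_smul]
    norm_num
  have c1 : z * z + z * z = 0 := by
    rw [← norm_le_zero_iff]
    apply le_zero_of_eps _ (4 * ‖z‖ + 2) (by positivity)
    intro ε hε hε1
    obtain ⟨F, s, hsF, hsodd, hzs⟩ := exists_odd_approx a Θ hΘ hgen hΘΘ z hε
    rw [hzz] at hzs
    obtain ⟨k, hk⟩ := (eventually_disjoint F F).exists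
    have hTs_mem := T_adjoin_mem a T hT k hsF
    have hTsodd : Θ (T k s) = -(T k s) := by rw [hΘT, hsodd, map_neg]
    have hanti : T k s * s + s * T k s = 0 := by
      have h := odd_supercommute a Θ hCAR₁ hCAR₂ hΘ hk hTs_mem hTsodd hsF
      rw [hsodd, mul_neg] at h
      rw [h]
      exact add_neg_cancel _
    have hzTs : z - T k s = T k (z - s) := by rw [map_sub, hinv k]
    have hnzTs : ‖z - T k s‖ < ε := by rw [hzTs, norm_map']; exact hzs
    have hnTs : ‖T k s‖ ≤ ‖z‖ + ε := by
      rw [norm_map']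
      have h1 : ‖s‖ - ‖z‖ ≤ ‖s - z‖ := norm_sub_norm_le _ _
      have h2 : ‖s - z‖ = ‖z - s‖ := norm_sub_rev _ _
      linarith
    have hid : z * z + z * z = ((z - T k s) * z + T k s * (z - s)) +
        ((z - s) * z + s * (z - T k s)) + (T k s * s + s * T k s) := by noncomm_ring
    rw [hid, hanti, add_zero]
    have hsle : ‖s‖ ≤ ‖z‖ + ε := by
      have h1 : ‖s‖ - ‖z‖ ≤ ‖s - z‖ := norm_sub_norm_le _ _
      have h2 : ‖s - z‖ = ‖z - s‖ := norm_sub_rev _ _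
      linarith
    have b1 : ‖(z - T k s) * z‖ ≤ ε * ‖z‖ :=
      le_trans (norm_mul_le _ _) (mul_le_mul_of_nonneg_right hnzTs.le (norm_nonneg _))
    have b2 : ‖T k s * (z - s)‖ ≤ (‖z‖ + ε) * ε :=
      le_trans (norm_mul_le _ _) (mul_le_mul hnTs hzs.le (norm_nonneg _) (by positivity))
    have b3 : ‖(z - s) * z‖ ≤ ε * ‖z‖ :=
      le_trans (norm_mul_le _ _) (mul_le_mul_of_nonneg_right hzs.le (norm_nonneg _))
    have b4 : ‖s * (z - T k s)‖ ≤ (‖z‖ + ε) * ε :=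
      le_trans (norm_mul_le _ _) (mul_le_mul hsle hnzTs.le (norm_nonneg _) (by positivity))
    have hb := norm_add₄ ((z - T k s) * z) (T k s * (z - s)) ((z - s) * z) (s * (z - T k s))
    have htri : ‖(z - T k s) * z + T k s * (z - s) + ((z - s) * z + s * (z - T k s))‖ ≤
        ‖(z - T k s) * z + T k s * (z - s) + (z - s) * z + s * (z - T k s)‖ := by
      apply le_of_eq
      congr 1
      noncomm_ring
    have hznn : (0:ℝ) ≤ ‖z‖ := norm_nonneg _
    nlinarith [hb, htri, b1, b2, b3, b4]
  have c2 : z * star z + star z * z = 0 := by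
    rw [← norm_le_zero_iff]
    apply le_zero_of_eps _ (4 * ‖z‖ + 2) (by positivity)
    intro ε hε hε1
    obtain ⟨F, s, hsF, hsodd, hzs⟩ := exists_odd_approx a Θ hΘ hgen hΘΘ z hε
    rw [hzz] at hzs
    obtain ⟨k, hk⟩ := (eventually_disjoint F F).exists
    have hTs_mem := T_adjoin_mem a T hT k hsF
    have hTsodd : Θ (T k s) = -(T k s) := by rw [hΘT, hsodd, map_neg]
    have hs'odd : Θ (star s) = -(star s) := by rw [map_star, hsodd, star_neg]
    have hanti : T k s * star s + star s * T k s = 0 := by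
      have h := odd_supercommute a Θ hCAR₁ hCAR₂ hΘ hk hTs_mem hTsodd (star_mem hsF)
      rw [hs'odd, mul_neg] at h
      rw [h]
      exact add_neg_cancel _
    have hzTs : z - T k s = T k (z - s) := by rw [map_sub, hinv k]
    have hnzTs : ‖z - T k s‖ < ε := by rw [hzTs, norm_map']; exact hzs
    have hnstar : ‖star z - star s‖ < ε := by rw [← star_sub, norm_star]; exact hzs
    have hnTs : ‖T k s‖ ≤ ‖z‖ + ε := by
      rw [norm_map']
      have h1 : ‖s‖ - ‖z‖ ≤ ‖s - z‖ := norm_sub_norm_le _ _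
      have h2 : ‖s - z‖ = ‖z - s‖ := norm_sub_rev _ _
      linarith
    have hsle : ‖star s‖ ≤ ‖z‖ + ε := by
      rw [norm_star]
      have h1 : ‖s‖ - ‖z‖ ≤ ‖s - z‖ := norm_sub_norm_le _ _
      have h2 : ‖s - z‖ = ‖z - s‖ := norm_sub_rev _ _
      linarith
    have hzn : ‖star z‖ = ‖z‖ := norm_star _
    have hid : z * star z + star z * z = ((z - T k s) * star z + T k s * (star z - star s)) +
        ((star z - star s) * z + star s * (z - T k s)) +
        (T k s * star s + star s * T k s) := by noncomm_ring
    rw [hid, hanti, add_zero]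
    have b1 : ‖(z - T k s) * star z‖ ≤ ε * ‖z‖ := by
      refine le_trans (norm_mul_le _ _) ?_
      rw [hzn]
      exact mul_le_mul_of_nonneg_right hnzTs.le (norm_nonneg _)
    have b2 : ‖T k s * (star z - star s)‖ ≤ (‖z‖ + ε) * ε :=
      le_trans (norm_mul_le _ _) (mul_le_mul hnTs hnstar.le (norm_nonneg _) (by positivity))
    have b3 : ‖(star z - star s) * z‖ ≤ ε * ‖z‖ :=
      le_trans (norm_mul_le _ _) (mul_le_mul_of_nonneg_right hnstar.le (norm_nonneg _))
    have b4 : ‖star s * (z - T k s)‖ ≤ (‖z‖ + ε) * ε :=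
      le_trans (norm_mul_le _ _) (mul_le_mul hsle hnzTs.le (norm_nonneg _) (by positivity))
    have hb := norm_add₄ ((z - T k s) * star z) (T k s * (star z - star s))
      ((star z - star s) * z) (star s * (z - T k s))
    have htri : ‖(z - T k s) * star z + T k s * (star z - star s) +
        ((star z - star s) * z + star s * (z - T k s))‖ ≤
        ‖(z - T k s) * star z + T k s * (star z - star s) +
        (star z - star s) * z + star s * (z - T k s)‖ := by
      apply le_of_eq
      congr 1
      noncomm_ring
    have hznn : (0:ℝ) ≤ ‖z‖ := norm_nonneg _
    nlinarith [hb, htri, b1, b2, b3, b4]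
  -- conclude z = 0
  have hzz0 : z * z = 0 := by
    have h2 : (2:ℂ) • (z * z) = 0 := by rw [two_smul]; exact c1
    rcases smul_eq_zero.mp h2 with h | h
    · exact absurd h (by norm_num)
    · exact h
  have hswap : z * star z = -(star z * z) := by
    rw [eq_neg_iff_add_eq_zero]
    exact c2
  have hsq : (star z * z) * (star z * z) = 0 := by
    calc (star z * z) * (star z * z) = star z * (z * star z) * z := by noncomm_ring
      _ = star z * (-(star z * z)) * z := by rw [hswap]
      _ = -(star z * star z * (z * z)) := by noncomm_ring
      _ = 0 := by rw [hzz0, mul_zero, neg_zero]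
  have h1 : ‖star z * z‖ * ‖star z * z‖ = 0 := by
    have h := CStarRing.norm_star_mul_self (x := star z * z)
    rw [star_mul, star_star, hsq, norm_zero] at h
    exact h.symm
  have h2 : star z * z = 0 := by
    rw [← norm_eq_zero]
    exact mul_self_eq_zero.mp h1
  have h3 : ‖z‖ * ‖z‖ = 0 := by
    have h := CStarRing.norm_star_mul_self (x := z)
    rw [h2, norm_zero] at h
    exact h.symm
  rw [← norm_eq_zero]
  exact mul_self_eq_zero.mp h3

include hCAR₁ hCAR₂ hΘ in
/-- An asymptotically central element is even. -/
lemma AC_implies_even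
    (hgen : (StarAlgebra.adjoin ℂ (a '' (Set.univ : Set (Fin ν → ℤ)))).topologicalClosure = ⊤)
    (hΘΘ : ∀ x : A, Θ (Θ x) = x)
    (T : (Fin ν → ℤ) → (A ≃⋆ₐ[ℂ] A)) (hT : ∀ k i, T k (a i) = a (i + k))
    (hΘT : ∀ (k : Fin ν → ℤ) (x : A), Θ (T k x) = T k (Θ x))
    [Infinite (Fin ν → ℤ)] [Nontrivial A]
    {x : A}
    (hAC : ∀ y : A, Filter.Tendsto (fun k : Fin ν → ℤ => ‖T k x * y - y * T k x‖)
      Filter.cofinite (nhds 0)) :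
    Θ x = x := by
  -- the basic odd unitary
  have ha0 : a 0 * a 0 = 0 := by
    have h2 : (2:ℂ) • (a 0 * a 0) = 0 := by rw [two_smul]; exact hCAR₂ 0 0
    rcases smul_eq_zero.mp h2 with h' | h'
    · exact absurd h' (by norm_num)
    · exact h'
  have ha0' : star (a 0) * star (a 0) = 0 := by rw [← star_mul, ha0, star_zero]
  set u : A := a 0 + star (a 0) with hu_def
  have hcross := hCAR₁ 0 0
  rw [if_pos rfl] at hcross
  have huu : u * u = 1 := by
    have hexp : u * u = a 0 * a 0 + (star (a 0) * a 0 + a 0 * star (a 0)) +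
        star (a 0) * star (a 0) := by rw [hu_def]; noncomm_ring
    rw [hexp, ha0, ha0', hcross, zero_add, add_zero]
  have hstaru : star u = u := by rw [hu_def, star_add, star_star, add_comm]
  have hΘu : Θ u = -u := by rw [hu_def, map_add, map_star, hΘ 0, star_neg, ← neg_add]
  have hnu : ‖u‖ = 1 := by
    have h := CStarRing.norm_star_mul_self (x := u)
    rw [hstaru, huu, norm_one] at h
    nlinarith [norm_nonneg u]
  have humem : u ∈ StarAlgebra.adjoin ℂ
      (a '' ((({0} : Finset (Fin ν → ℤ))) : Set (Fin ν → ℤ))) := by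
    have h0 : a 0 ∈ StarAlgebra.adjoin ℂ
        (a '' ((({0} : Finset (Fin ν → ℤ))) : Set (Fin ν → ℤ))) :=
      StarAlgebra.subset_adjoin ℂ _ ⟨0, by simp, rfl⟩
    rw [hu_def]
    exact add_mem h0 (star_mem h0)
  set z : A := (2:ℂ)⁻¹ • (x - Θ x) with hz_def
  -- Θ x is also asymptotically central
  have hACθ : ∀ y : A, Filter.Tendsto (fun k : Fin ν → ℤ =>
      ‖T k (Θ x) * y - y * T k (Θ x)‖) Filter.cofinite (nhds 0) := by
    intro y
    have heq : (fun k : Fin ν → ℤ => ‖T k (Θ x) * y - y * T k (Θ x)‖)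
        = fun k : Fin ν → ℤ => ‖T k x * Θ y - Θ y * T k x‖ := by
      funext k
      rw [← hΘT]
      calc ‖Θ (T k x) * y - y * Θ (T k x)‖
          = ‖Θ (T k x * Θ y - Θ y * T k x)‖ := by rw [map_sub, map_mul, map_mul, hΘΘ]
        _ = ‖T k x * Θ y - Θ y * T k x‖ := norm_map' Θ _
    rw [heq]
    exact hAC (Θ y)
  -- the odd part is asymptotically central (against u)
  have hACz : Filter.Tendsto (fun k : Fin ν → ℤ => ‖T k z * u - u * T k z‖)
      Filter.cofinite (nhds 0) := by
    apply squeeze_zero (fun k => norm_nonneg _)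
      (g := fun k : Fin ν → ℤ => (2:ℝ)⁻¹ *
        (‖T k x * u - u * T k x‖ + ‖T k (Θ x) * u - u * T k (Θ x)‖))
    · intro k
      have hidz : T k z * u - u * T k z = (2:ℂ)⁻¹ •
          ((T k x * u - u * T k x) - (T k (Θ x) * u - u * T k (Θ x))) := by
        rw [hz_def, map_smul, map_sub, smul_mul_assoc, mul_smul_comm, ← smul_sub]
        congr 1
        noncomm_ring
      rw [hidz, norm_smul]
      have h2 : ‖(2:ℂ)⁻¹‖ = (2:ℝ)⁻¹ := by norm_num
      rw [h2]
      apply mul_le_mul_of_nonneg_left (norm_sub_le _ _) (by norm_num)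
    · have := ((hAC u).add (hACθ u)).const_mul ((2:ℝ)⁻¹)
      simpa using this
  -- key estimate
  have key : ∀ ε : ℝ, 0 < ε → ‖z‖ < 5 * ε := by
    intro ε hε
    obtain ⟨F, s, hsF, hsodd, hzs0⟩ := exists_odd_approx a Θ hΘ hgen hΘΘ x hε
    have hzs : ‖z - s‖ < ε := hzs0
    have hev2 : ∀ᶠ k in Filter.cofinite, ‖T k z * u - u * T k z‖ < ε := by
      have h := hACz
      rw [Metric.tendsto_nhds] at h
      filter_upwards [h ε hε] with k hk
      rwa [Real.dist_eq, sub_zero, abs_of_nonneg (norm_nonneg _)] at hk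
    obtain ⟨k, hk1, hk2⟩ := ((eventually_disjoint F {0}).and hev2).exists
    have hTs_mem := T_adjoin_mem a T hT k hsF
    have hTsodd : Θ (T k s) = -(T k s) := by rw [hΘT, hsodd, map_neg]
    have hanti : u * T k s = -(T k s * u) := by
      have h := odd_supercommute a Θ hCAR₁ hCAR₂ hΘ hk1 hTs_mem hTsodd humem
      rw [h, hΘu, mul_neg]
    have hnorm1 : ‖T k s * u - u * T k s‖ = 2 * ‖s‖ := by
      rw [hanti, sub_neg_eq_add, ← two_smul ℝ (T k s * u), norm_smul,
        norm_mul_unit huu hnu, norm_map']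
      norm_num
    have hdiff : ‖(T k z * u - u * T k z) - (T k s * u - u * T k s)‖ ≤ 2 * ε := by
      have hidd : (T k z * u - u * T k z) - (T k s * u - u * T k s)
          = T k (z - s) * u - u * T k (z - s) := by rw [map_sub]; noncomm_ring
      rw [hidd]
      have hn : ‖T k (z - s)‖ < ε := by rw [norm_map']; exact hzs
      calc ‖T k (z - s) * u - u * T k (z - s)‖
          ≤ ‖T k (z - s) * u‖ + ‖u * T k (z - s)‖ := norm_sub_le _ _
        _ ≤ ‖T k (z - s)‖ * ‖u‖ + ‖u‖ * ‖T k (z - s)‖ :=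
            add_le_add (norm_mul_le _ _) (norm_mul_le _ _)
        _ ≤ 2 * ε := by rw [hnu, mul_one, one_mul]; linarith
    have htr : 2 * ‖s‖ ≤ ‖T k z * u - u * T k z‖ + 2 * ε := by
      have hrw := norm_sub_le (T k z * u - u * T k z)
        ((T k z * u - u * T k z) - (T k s * u - u * T k s))
      rw [sub_sub_cancel] at hrw
      calc 2 * ‖s‖ = ‖T k s * u - u * T k s‖ := hnorm1.symm
        _ ≤ ‖T k z * u - u * T k z‖ +
            ‖(T k z * u - u * T k z) - (T k s * u - u * T k s)‖ := hrw
        _ ≤ ‖T k z * u - u * T k z‖ + 2 * ε := by linarith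
    have hzle : ‖z‖ ≤ ‖s‖ + ε := by
      have h1 : ‖z‖ - ‖s‖ ≤ ‖z - s‖ := norm_sub_norm_le _ _
      linarith
    linarith
  have hz0 : z = 0 := by
    by_contra hne
    have hpos : 0 < ‖z‖ := norm_pos_iff.mpr hne
    have := key (‖z‖ / 5) (by positivity)
    linarith
  have hx0 : x - Θ x = 0 := by
    have h2 : (2:ℂ)⁻¹ • (x - Θ x) = 0 := hz0
    rcases smul_eq_zero.mp h2 with h' | h'
    · exact absurd h' (by norm_num)
    · exact h'
  have := sub_eq_zero.mp hx0
  exact this.symm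

end CarAux

/-- The C*-subalgebra `A(I)` of the CAR algebra associated to a region `I ⊆ ℤ^ν`. -/
noncomputable def carSub {ν : ℕ} {A : Type*} [CStarAlgebra A]
    (a : (Fin ν → ℤ) → A) (I : Set (Fin ν → ℤ)) : StarSubalgebra ℂ A :=
  (StarAlgebra.adjoin ℂ (a '' I)).topologicalClosure

/-- An element `x` of the CAR algebra `A` over `ℤ^ν` (with `ν ≥ 1`) is even
(`Θ x = x`) if and only if it is asymptotically central under lattice translations:
`‖[τ_k x, y]‖ → 0` as `|k| → ∞` (i.e. along the cofinite filter on `ℤ^ν`) for all `y ∈ A`.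
Consequently, any automorphism `α` of `A` commuting with all lattice translations `τ_k`
(`k ∈ ℤ^ν`) commutes with the parity automorphism `Θ`. -/
theorem car_even_iff_asymptotically_central
    {ν : ℕ} (hν : 0 < ν) {A : Type*} [CStarAlgebra A]
    (a : (Fin ν → ℤ) → A)
    (hCAR₁ : ∀ i j, star (a i) * a j + a j * star (a i) = if i = j then (1 : A) else 0)
    (hCAR₂ : ∀ i j, a i * a j + a j * a i = 0)
    (hgen : carSub a Set.univ = ⊤)
    (Θ : A ≃⋆ₐ[ℂ] A)
    (hΘ : ∀ i, Θ (a i) = - a i)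
    (T : (Fin ν → ℤ) → (A ≃⋆ₐ[ℂ] A))
    (hT : ∀ k i, T k (a i) = a (i + k)) :
    (∀ x : A, Θ x = x ↔
      ∀ y : A, Filter.Tendsto (fun k : Fin ν → ℤ => ‖T k x * y - y * T k x‖)
        Filter.cofinite (nhds 0)) ∧
    (∀ α : A ≃⋆ₐ[ℂ] A, (∀ (k : Fin ν → ℤ) (x : A), α (T k x) = T k (α x)) →
      ∀ x : A, α (Θ x) = Θ (α x)) := by
  rcases subsingleton_or_nontrivial A with hsub | hnt
  · refine ⟨fun x => ⟨fun _ y => ?_, fun _ => Subsingleton.elim _ _⟩,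
      fun α hα x => Subsingleton.elim _ _⟩
    have heq : (fun k : Fin ν → ℤ => ‖T k x * y - y * T k x‖) = fun _ => (0:ℝ) := by
      funext k
      rw [Subsingleton.elim (T k x * y - y * T k x) 0, norm_zero]
    rw [heq]
    exact tendsto_const_nhds
  · haveI : Nonempty (Fin ν) := ⟨⟨0, hν⟩⟩
    haveI : Infinite (Fin ν → ℤ) := by infer_instance
    have hgen' : (StarAlgebra.adjoin ℂ
        (a '' (Set.univ : Set (Fin ν → ℤ)))).topologicalClosure = ⊤ := hgen
    have hΘcont : Continuous Θ := (NonUnitalStarAlgHom.isometry Θ Θ.injective).continuous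
    have hΘΘ : ∀ x : A, Θ (Θ x) = x := by
      apply CarAux.dense_eq a hgen' (hΘcont.comp hΘcont) continuous_id
      intro s hs
      induction hs using StarAlgebra.adjoin_induction with
      | mem z hz =>
        obtain ⟨i, _, rfl⟩ := hz
        show Θ (Θ (a i)) = a i
        rw [hΘ i, map_neg, hΘ i, neg_neg]
      | algebraMap r =>
        show Θ (Θ ((algebraMap ℂ A) r)) = id ((algebraMap ℂ A) r)
        rw [CarAux.halg, CarAux.halg]
        rfl
      | add p q hp hq ihp ihq =>
        show Θ (Θ (p + q)) = p + q
        rw [map_add, map_add]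
        exact congrArg₂ (· + ·) ihp ihq
      | mul p q hp hq ihp ihq =>
        show Θ (Θ (p * q)) = p * q
        rw [map_mul, map_mul]
        exact congrArg₂ (· * ·) ihp ihq
      | star p hp ihp =>
        show Θ (Θ (star p)) = star p
        rw [map_star, map_star]
        exact congrArg Star.star ihp
    have hΘT : ∀ (k : Fin ν → ℤ) (x : A), Θ (T k x) = T k (Θ x) := by
      intro k
      have hTcont : Continuous (T k) :=
        (NonUnitalStarAlgHom.isometry (T k) (T k).injective).continuous
      apply CarAux.dense_eq a hgen' (hΘcont.comp hTcont) (hTcont.comp hΘcont)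
      intro s hs
      induction hs using StarAlgebra.adjoin_induction with
      | mem z hz =>
        obtain ⟨i, _, rfl⟩ := hz
        show Θ (T k (a i)) = T k (Θ (a i))
        rw [hT k i, hΘ, hΘ i, map_neg, hT k i]
      | algebraMap r =>
        show Θ (T k ((algebraMap ℂ A) r)) = T k (Θ ((algebraMap ℂ A) r))
        rw [CarAux.halg, CarAux.halg, CarAux.halg]
      | add p q hp hq ihp ihq =>
        show Θ (T k (p + q)) = T k (Θ (p + q))
        simp only [map_add]
        exact congrArg₂ (· + ·) ihp ihq
      | mul p q hp hq ihp ihq =>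
        show Θ (T k (p * q)) = T k (Θ (p * q))
        simp only [map_mul]
        exact congrArg₂ (· * ·) ihp ihq
      | star p hp ihp =>
        show Θ (T k (star p)) = T k (Θ (star p))
        simp only [map_star]
        exact congrArg Star.star ihp
    have hmain : ∀ x : A, Θ x = x ↔
        ∀ y : A, Filter.Tendsto (fun k : Fin ν → ℤ => ‖T k x * y - y * T k x‖)
          Filter.cofinite (nhds 0) := by
      intro x
      constructor
      · intro hx y
        exact CarAux.even_implies_AC a Θ hCAR₁ hCAR₂ hΘ hgen' hΘΘ T hT hΘT hx y
      · intro hx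
        exact CarAux.AC_implies_even a Θ hCAR₁ hCAR₂ hΘ hgen' hΘΘ T hT hΘT hx
    refine ⟨hmain, ?_⟩
    intro α hα
    -- α.symm also commutes with translations
    have hα' : ∀ (k : Fin ν → ℤ) (y : A), α.symm (T k y) = T k (α.symm y) := by
      intro k y
      have h := hα k (α.symm y)
      rw [StarAlgEquiv.apply_symm_apply] at h
      calc α.symm (T k y) = α.symm (α (T k (α.symm y))) := by rw [h]
        _ = T k (α.symm y) := StarAlgEquiv.symm_apply_apply _ _
    -- automorphisms commuting with translations preserve even elements
    have hACtrans : ∀ (β : A ≃⋆ₐ[ℂ] A), (∀ (k : Fin ν → ℤ) (p : A), β (T k p) = T k (β p)) →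
        ∀ p : A, Θ p = p → Θ (β p) = β p := by
      intro β hβ p hp
      apply (hmain (β p)).2
      intro y
      have heq : (fun k : Fin ν → ℤ => ‖T k (β p) * y - y * T k (β p)‖)
          = fun k : Fin ν → ℤ => ‖T k p * β.symm y - β.symm y * T k p‖ := by
        funext k
        rw [← hβ k p]
        calc ‖β (T k p) * y - y * β (T k p)‖
            = ‖β (T k p * β.symm y - β.symm y * T k p)‖ := by
              rw [map_sub, map_mul, map_mul, StarAlgEquiv.apply_symm_apply]
          _ = ‖T k p * β.symm y - β.symm y * T k p‖ := CarAux.norm_map' β _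
      rw [heq]
      exact (hmain p).1 hp (β.symm y)
    have heven : ∀ p : A, Θ p = p → Θ (α p) = α p := hACtrans α hα
    -- the automorphism ψ = Θ ∘ α⁻¹ ∘ Θ ∘ α
    set ψ : A → A := fun p => Θ (α.symm (Θ (α p))) with hψ_def
    have hψmul : ∀ p q : A, ψ (p * q) = ψ p * ψ q := by
      intro p q; simp only [hψ_def, map_mul]
    have hψadd : ∀ p q : A, ψ (p + q) = ψ p + ψ q := by
      intro p q; simp only [hψ_def, map_add]
    have hψone : ψ (1 : A) = 1 := by simp only [hψ_def, map_one]
    have hψT : ∀ (k : Fin ν → ℤ) (p : A), ψ (T k p) = T k (ψ p) := by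
      intro k p
      simp only [hψ_def]
      rw [hα k p, hΘT, hα' k, hΘT]
    have hψeven : ∀ p : A, Θ p = p → ψ p = p := by
      intro p hp
      have h1 : Θ (α p) = α p := heven p hp
      simp only [hψ_def]
      rw [h1, StarAlgEquiv.symm_apply_apply, hp]
    -- the basic odd unitary
    have ha0 : a 0 * a 0 = 0 := by
      have h2 : (2:ℂ) • (a 0 * a 0) = 0 := by rw [two_smul]; exact hCAR₂ 0 0
      rcases smul_eq_zero.mp h2 with h' | h'
      · exact absurd h' (by norm_num)
      · exact h'
    have ha0' : star (a 0) * star (a 0) = 0 := by rw [← star_mul, ha0, star_zero]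
    set u : A := a 0 + star (a 0) with hu_def
    have hcross := hCAR₁ 0 0
    rw [if_pos rfl] at hcross
    have huu : u * u = 1 := by
      have hexp : u * u = a 0 * a 0 + (star (a 0) * a 0 + a 0 * star (a 0)) +
          star (a 0) * star (a 0) := by rw [hu_def]; noncomm_ring
      rw [hexp, ha0, ha0', hcross, zero_add, add_zero]
    have hΘu : Θ u = -u := by rw [hu_def, map_add, map_star, hΘ 0, star_neg, ← neg_add]
    -- the obstruction w
    set w : A := ψ u * u with hw_def
    have hψuu : ψ u * ψ u = 1 := by rw [← hψmul, huu, hψone]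
    have hψodd : ∀ p : A, Θ p = -p → ψ p = w * p := by
      intro p hp
      have hup : Θ (u * p) = u * p := by rw [map_mul, hΘu, hp, neg_mul_neg]
      have h1 : ψ u * ψ p = u * p := by rw [← hψmul]; exact hψeven _ hup
      calc ψ p = (ψ u * ψ u) * ψ p := by rw [hψuu, one_mul]
        _ = ψ u * (ψ u * ψ p) := by rw [mul_assoc]
        _ = ψ u * (u * p) := by rw [h1]
        _ = w * p := by rw [hw_def, mul_assoc]
    have hwinv : ∀ k, T k w = w := by
      intro k
      have hTuodd : Θ (T k u) = -(T k u) := by rw [hΘT, hΘu, map_neg]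
      have h1 : ψ (T k u) = w * T k u := hψodd _ hTuodd
      have h2 : ψ (T k u) = T k w * T k u := by
        rw [hψT, hψodd u hΘu, map_mul]
      have h3 : w * T k u = T k w * T k u := by rw [← h1, h2]
      have hTuu : T k u * T k u = 1 := by rw [← map_mul, huu, map_one]
      calc T k w = T k w * (T k u * T k u) := by rw [hTuu, mul_one]
        _ = (T k w * T k u) * T k u := by rw [mul_assoc]
        _ = (w * T k u) * T k u := by rw [← h3]
        _ = w * (T k u * T k u) := by rw [mul_assoc]
        _ = w := by rw [hTuu, mul_one]
    -- w is even
    have hweven : Θ w = w := by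
      have hzodd : Θ ((2:ℂ)⁻¹ • (w - Θ w)) = -((2:ℂ)⁻¹ • (w - Θ w)) := by
        rw [map_smul, map_sub, hΘΘ, ← smul_neg, neg_sub]
      have hzinv : ∀ k, T k ((2:ℂ)⁻¹ • (w - Θ w)) = (2:ℂ)⁻¹ • (w - Θ w) := by
        intro k
        have hTΘw : T k (Θ w) = Θ w := by rw [← hΘT, hwinv k]
        rw [map_smul, map_sub, hwinv k, hTΘw]
      have h0 := CarAux.odd_invariant_eq_zero a Θ hCAR₁ hCAR₂ hΘ hgen' hΘΘ T hT hΘT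
        hzodd hzinv
      rcases smul_eq_zero.mp h0 with h' | h'
      · exact absurd h' (by norm_num)
      · exact (sub_eq_zero.mp h').symm
    -- v = α⁻¹ u and its parity decomposition
    set v : A := α.symm u with hv_def
    have hvv : v * v = 1 := by rw [hv_def, ← map_mul, huu, map_one]
    have hψv : ψ v = -Θ v := by
      simp only [hψ_def, hv_def]
      rw [StarAlgEquiv.apply_symm_apply, hΘu, map_neg, map_neg]
    set vp : A := (2:ℂ)⁻¹ • (v + Θ v) with hvp_def
    set vm : A := (2:ℂ)⁻¹ • (v - Θ v) with hvm_def
    have hv_sum : v = vp + vm := by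
      rw [hvp_def, hvm_def, ← smul_add]
      have h : v + Θ v + (v - Θ v) = (2:ℂ) • v := by rw [two_smul]; abel
      rw [h, smul_smul]
      norm_num
    have hvpe : Θ vp = vp := by rw [hvp_def, map_smul, map_add, hΘΘ, add_comm]
    have hvmo : Θ vm = -vm := by rw [hvm_def, map_smul, map_sub, hΘΘ, ← smul_neg, neg_sub]
    have hΘv : Θ v = vp - vm := by
      conv_lhs => rw [hv_sum]
      rw [map_add, hvpe, hvmo]
      abel
    have hψv2 : ψ v = vp + w * vm := by
      conv_lhs => rw [hv_sum]
      rw [hψadd, hψeven _ hvpe, hψodd _ hvmo]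
    have hE1 : vp + vp = vm - w * vm := by
      have h := hψv
      rw [hψv2, hΘv] at h
      calc vp + vp = (vp + w * vm) + vp - w * vm := by abel
        _ = -(vp - vm) + vp - w * vm := by rw [h]
        _ = vm - w * vm := by abel
    have hE2 : vp + vp = -(vp + vp) := by
      have hθ := congrArg Θ hE1
      rw [map_add, map_sub, map_mul, hvpe, hvmo, hweven] at hθ
      calc vp + vp = -vm - w * -vm := hθ
        _ = -(vm - w * vm) := by rw [mul_neg]; abel
        _ = -(vp + vp) := by rw [hE1]
    have hvp0 : vp = 0 := by
      have h1 : (vp + vp) + (vp + vp) = 0 := add_eq_zero_iff_eq_neg.mpr hE2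
      have h2 : (2:ℂ) • ((2:ℂ) • vp) = 0 := by
        rw [two_smul, two_smul]
        exact h1
      rcases smul_eq_zero.mp h2 with h' | h'
      · exact absurd h' (by norm_num)
      · rcases smul_eq_zero.mp h' with h'' | h''
        · exact absurd h'' (by norm_num)
        · exact h''
    have hwvm : w * vm = vm := by
      have h := hE1
      rw [hvp0, add_zero] at h
      have h2 : vm - w * vm = 0 := h.symm
      exact (sub_eq_zero.mp h2).symm
    have hveqvm : v = vm := by rw [hv_sum, hvp0, zero_add]
    have hwv : w * v = v := by rw [hveqvm]; exact hwvm
    have hw1 : w = 1 := by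
      calc w = w * (v * v) := by rw [hvv, mul_one]
        _ = (w * v) * v := (mul_assoc _ _ _).symm
        _ = v * v := by rw [hwv]
        _ = 1 := hvv
    -- hence ψ is the identity
    have hψid : ∀ p : A, ψ p = p := by
      intro p
      have hpe : Θ ((2:ℂ)⁻¹ • (p + Θ p)) = (2:ℂ)⁻¹ • (p + Θ p) := by
        rw [map_smul, map_add, hΘΘ, add_comm]
      have hpo : Θ ((2:ℂ)⁻¹ • (p - Θ p)) = -((2:ℂ)⁻¹ • (p - Θ p)) := by
        rw [map_smul, map_sub, hΘΘ, ← smul_neg, neg_sub]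
      have hdecomp : p = (2:ℂ)⁻¹ • (p + Θ p) + (2:ℂ)⁻¹ • (p - Θ p) := by
        rw [← smul_add]
        have h : p + Θ p + (p - Θ p) = (2:ℂ) • p := by rw [two_smul]; abel
        rw [h, smul_smul]
        norm_num
      calc ψ p = ψ ((2:ℂ)⁻¹ • (p + Θ p) + (2:ℂ)⁻¹ • (p - Θ p)) := by rw [← hdecomp]
        _ = ψ ((2:ℂ)⁻¹ • (p + Θ p)) + ψ ((2:ℂ)⁻¹ • (p - Θ p)) := hψadd _ _
        _ = (2:ℂ)⁻¹ • (p + Θ p) + w * ((2:ℂ)⁻¹ • (p - Θ p)) := by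
            rw [hψeven _ hpe, hψodd _ hpo]
        _ = (2:ℂ)⁻¹ • (p + Θ p) + (2:ℂ)⁻¹ • (p - Θ p) := by rw [hw1, one_mul]
        _ = p := hdecomp.symm
    intro x
    have h := hψid x
    simp only [hψ_def] at h
    have h2 : α.symm (Θ (α x)) = Θ x := by
      have h3 := congrArg Θ h
      rw [hΘΘ] at h3
      exact h3
    have h4 : Θ (α x) = α (Θ x) := by
      have h5 := congrArg α h2
      rw [StarAlgEquiv.apply_symm_apply] at h5
      exact h5
    exact h4.symm
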